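/- Let F be a field and k ≥ 1. For each integer a with 0 ≤ a ≤ k−1 and each v ∈ F^{k−a−1}, let M(a, v) be the k×k matrix over F given in block form (row blocks of sizes 1, a, k−a−1; column blocks of sizes a, 1, k−a−1) by M(a, v) = [[0, 0, 0],[I_a, 0, 0],[0, v, I_{k−a−1}]], i.e. the first row is zero, rows 2 through a+1 form (I_a 0 0), and rows a+2 through k form (0 v I_{k−a−1}). Then the matrices M(a, v) form a complete and irredundant set of representatives for the orbits of GL_k(F) acting by left multiplication on the set S_k(F) of k×k matrices over F with one-dimensional kernel (equivalently, rank k−1): for every m ∈ S_k(F) there exist h ∈ GL_k(F), a unique a ∈ {0, …, k−1}, and a unique v ∈ F^{k−a−1} such that h·m = M(a, v). -/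

import Mathlib

open Submodule LinearMap Module

section AuxGeneral

lemma exists_extend_equiv {F V : Type*} [Field F] [AddCommGroup V] [Module F V]
    [FiniteDimensional F V] {p q : Submodule F V} (e₀ : p ≃ₗ[F] q) :
    ∃ e : V ≃ₗ[F] V, ∀ z : p, e (z : V) = (e₀ z : V) := by
  obtain ⟨p', hp⟩ := p.exists_isCompl
  obtain ⟨q', hq⟩ := q.exists_isCompl
  have hfr : finrank F p' = finrank F q' := by
    have h1 := Submodule.finrank_add_eq_of_isCompl hp
    have h2 := Submodule.finrank_add_eq_of_isCompl hq
    have h3 : finrank F p = finrank F q := e₀.finrank_eq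
    omega
  let e₁ : p' ≃ₗ[F] q' := LinearEquiv.ofFinrankEq _ _ hfr
  refine ⟨(Submodule.prodEquivOfIsCompl p p' hp).symm ≪≫ₗ (e₀.prodCongr e₁) ≪≫ₗ
    Submodule.prodEquivOfIsCompl q q' hq, fun z => ?_⟩
  have h1 : (Submodule.prodEquivOfIsCompl p p' hp).symm (z : V) = (z, 0) := by
    rw [LinearEquiv.symm_apply_eq]
    have := Submodule.coe_prodEquivOfIsCompl p p' hp
    have h2 : (Submodule.prodEquivOfIsCompl p p' hp) (z, 0)
        = (p.subtype.coprod p'.subtype) (z, 0) := by rw [← this]; rfl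
    rw [h2]; simp [LinearMap.coprod_apply]
  simp only [LinearEquiv.trans_apply, h1]
  show (Submodule.prodEquivOfIsCompl q q' hq) ((e₀.prodCongr e₁) (z, 0)) = _
  have h2 : (e₀.prodCongr e₁) (z, 0) = (e₀ z, 0) := by
    simp [LinearEquiv.prodCongr_apply, Prod.ext_iff]
  rw [h2]
  have := Submodule.coe_prodEquivOfIsCompl q q' hq
  calc (Submodule.prodEquivOfIsCompl q q' hq) (e₀ z, 0)
      = (q.subtype.coprod q'.subtype) (e₀ z, 0) := by rw [← this]; rfl
    _ = (e₀ z : V) := by simp [LinearMap.coprod_apply]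

lemma exists_equiv_comp_eq {F V : Type*} [Field F] [AddCommGroup V] [Module F V]
    [FiniteDimensional F V] (f g : V →ₗ[F] V) (h : ker f = ker g) :
    ∃ e : V ≃ₗ[F] V, ∀ y, e (g y) = f y := by
  let e₀ : (range g : Submodule F V) ≃ₗ[F] (range f : Submodule F V) :=
    g.quotKerEquivRange.symm ≪≫ₗ Submodule.quotEquivOfEq _ _ h.symm ≪≫ₗ f.quotKerEquivRange
  have he₀ : ∀ y : V, (e₀ ⟨g y, mem_range_self g y⟩ : V) = f y := by
    intro y
    have h1 : (⟨g y, mem_range_self g y⟩ : range g) =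
        g.quotKerEquivRange (Submodule.Quotient.mk y) := by
      ext; rw [quotKerEquivRange_apply_mk]
    simp only [e₀, LinearEquiv.trans_apply, h1, LinearEquiv.symm_apply_apply,
      Submodule.quotEquivOfEq_mk, quotKerEquivRange_apply_mk]
  obtain ⟨e, he⟩ := exists_extend_equiv e₀
  exact ⟨e, fun y => by rw [show g y = ((⟨g y, mem_range_self g y⟩ : range g) : V) from rfl,
    he, he₀]⟩

end AuxGeneral



/-- The representative matrix `M(a, v)` for `0 ≤ a ≤ k−1` and `v ∈ F^{k−a−1}`:
in block form (row blocks of sizes `1, a, k−a−1`; column blocks of sizes `a, 1, k−a−1`)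
it is `[[0, 0, 0], [I_a, 0, 0], [0, v, I_{k−a−1}]]`. -/
def Mrep (F : Type*) [Field F] (k a : ℕ) (v : Fin (k - a - 1) → F) :
    Matrix (Fin k) (Fin k) F :=
  fun i j =>
    if hi : (i : ℕ) ≤ a then
      -- first row is zero; rows 2,…,a+1 form (I_a 0 0)
      (if (i : ℕ) = 0 then 0 else if (j : ℕ) + 1 = (i : ℕ) then 1 else 0)
    else
      -- rows a+2,…,k form (0 v I_{k−a−1})
      if (j : ℕ) = a then v ⟨(i : ℕ) - a - 1, by have := i.isLt; omega⟩
      else if (j : ℕ) = (i : ℕ) then 1 else 0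


lemma Mrep_mulVec {F : Type*} [Field F] {k a : ℕ} (ha : a < k) (v : Fin (k - a - 1) → F)
    (y : Fin k → F) (i : Fin k) :
    (Mrep F k a v).mulVec y i =
      if hi : (i : ℕ) ≤ a then
        (if (i : ℕ) = 0 then 0 else y ⟨(i : ℕ) - 1, by omega⟩)
      else v ⟨(i : ℕ) - a - 1, by have := i.isLt; omega⟩ * y ⟨a, ha⟩ + y i := by
  show (∑ j, Mrep F k a v i j * y j) = _
  by_cases hi : (i : ℕ) ≤ a
  · by_cases h0 : (i : ℕ) = 0
    · rw [dif_pos hi, if_pos h0]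
      apply Finset.sum_eq_zero
      intro j _
      simp [Mrep, hi, h0]
    · rw [dif_pos hi, if_neg h0]
      rw [Finset.sum_eq_single (⟨(i : ℕ) - 1, by omega⟩ : Fin k)]
      · simp only [Mrep, dif_pos hi, if_neg h0]
        rw [if_pos (show ((⟨(i : ℕ) - 1, by omega⟩ : Fin k) : ℕ) + 1 = (i : ℕ) by
          show (i : ℕ) - 1 + 1 = (i : ℕ); omega)]
        ring
      · intro j _ hj
        simp only [Mrep, dif_pos hi, if_neg h0]
        rw [if_neg, zero_mul]
        intro hc
        apply hj
        apply Fin.ext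
        simp only []
        omega
      · intro hmem; exact absurd (Finset.mem_univ _) hmem
  · rw [dif_neg hi]
    push_neg at hi
    have hne : (⟨a, ha⟩ : Fin k) ≠ i := by
      intro hc; apply absurd (congrArg Fin.val hc); simp; omega
    rw [show (Finset.univ : Finset (Fin k)) =
        insert (⟨a, ha⟩ : Fin k) (insert i ((Finset.univ : Finset (Fin k)) \ {⟨a, ha⟩, i}))
        from ?_]
    · rw [Finset.sum_insert, Finset.sum_insert, Finset.sum_eq_zero]
      · simp only [Mrep, dif_neg (not_le.mpr hi)]
        have h1 : ¬ ((i : ℕ) = a) := by omega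
        simp [h1]
      · intro j hj
        simp only [Finset.mem_sdiff, Finset.mem_insert, Finset.mem_singleton] at hj
        obtain ⟨-, hj⟩ := hj
        push_neg at hj
        simp only [Mrep, dif_neg (not_le.mpr hi)]
        rw [if_neg, if_neg, zero_mul]
        · intro hc; exact hj.2 (Fin.ext hc)
        · intro hc; exact hj.1 (Fin.ext hc)
      · simp
      · simp only [Finset.mem_insert, Finset.mem_sdiff, Finset.mem_singleton]
        push_neg
        tauto
    · ext j
      simp only [Finset.mem_univ, Finset.mem_insert, Finset.mem_sdiff, Finset.mem_singleton,
        true_iff]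
      tauto


lemma Mrep_rows {F : Type*} [Field F] {k a : ℕ} (ha : a < k) (v : Fin (k - a - 1) → F)
    (y : Fin k → F) (h : (Mrep F k a v).mulVec y = 0) :
    (∀ (j : ℕ) (hj : j < a), y ⟨j, by omega⟩ = 0) ∧
    (∀ (i : ℕ) (hi1 : a < i) (hi2 : i < k),
      v ⟨i - a - 1, by omega⟩ * y ⟨a, ha⟩ + y ⟨i, hi2⟩ = 0) := by
  constructor
  · intro j hj
    have h1 := congrFun h (⟨j + 1, by omega⟩ : Fin k)
    rw [Mrep_mulVec ha,
      dif_pos (show ((⟨j + 1, by omega⟩ : Fin k) : ℕ) ≤ a from hj),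
      if_neg (show ¬(((⟨j + 1, by omega⟩ : Fin k) : ℕ) = 0) from by
        show ¬(j + 1 = 0); omega)] at h1
    exact h1
  · intro i hi1 hi2
    have h1 := congrFun h (⟨i, hi2⟩ : Fin k)
    rw [Mrep_mulVec ha,
      dif_neg (show ¬(((⟨i, hi2⟩ : Fin k) : ℕ) ≤ a) from by show ¬(i ≤ a); omega)] at h1
    exact h1

/-- The matrices `M(a, v)` form a complete and irredundant set of representatives for
the orbits of `GL_k(F)` acting by left multiplication on the set of `k×k` matrices of
rank `k − 1` (one-dimensional kernel): every such `m` satisfies `h·m = M(a, v)` for some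
`h ∈ GL_k(F)` and a unique pair `(a, v)`. -/
theorem GL_left_orbit_reps (F : Type*) [Field F] (k : ℕ) (hk : 1 ≤ k)
    (m : Matrix (Fin k) (Fin k) F) (hm : m.rank = k - 1) :
    ∃ (h : Matrix.GeneralLinearGroup (Fin k) F) (a : ℕ) (ha : a < k)
      (v : Fin (k - a - 1) → F),
      h.val * m = Mrep F k a v ∧
      ∀ (h' : Matrix.GeneralLinearGroup (Fin k) F) (a' : ℕ) (ha' : a' < k)
        (v' : Fin (k - a' - 1) → F),
          h'.val * m = Mrep F k a' v' → a' = a ∧ HEq v' v := by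
  classical
  have hdim : finrank F (Fin k → F) = k := Module.finrank_fin_fun F
  have hrank : finrank F (range m.mulVecLin) = k - 1 := hm
  have hker1 : finrank F (ker m.mulVecLin) = 1 := by
    have h1 := LinearMap.finrank_range_add_finrank_ker m.mulVecLin
    rw [hdim] at h1
    omega
  have hne : ker m.mulVecLin ≠ ⊥ := by
    intro hc
    rw [hc] at hker1
    simp at hker1
  obtain ⟨u, hu_mem, hu_ne⟩ := (Submodule.ne_bot_iff _).mp hne
  have hex : ∃ n : ℕ, ∃ hn : n < k, u ⟨n, hn⟩ ≠ 0 := by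
    by_contra hc
    push_neg at hc
    apply hu_ne
    funext i
    have := hc i.val i.isLt
    simpa using this
  obtain ⟨a, ha, hua, hmin⟩ : ∃ (a : ℕ) (ha : a < k), u ⟨a, ha⟩ ≠ 0 ∧
      ∀ j : ℕ, j < a → ∀ hj : j < k, u ⟨j, hj⟩ = 0 := by
    obtain ⟨hn, hval⟩ := Nat.find_spec hex
    refine ⟨Nat.find hex, hn, hval, ?_⟩
    intro j hj hjk
    have := Nat.find_min hex hj
    push_neg at this
    exact this hjk
  set x : Fin k → F := (u ⟨a, ha⟩)⁻¹ • u with hx_def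
  have hxa : x ⟨a, ha⟩ = 1 := by
    simp only [hx_def, Pi.smul_apply, smul_eq_mul]
    exact inv_mul_cancel₀ hua
  have hxmem : x ∈ ker m.mulVecLin := Submodule.smul_mem _ _ hu_mem
  have hx0 : ∀ j : Fin k, (j : ℕ) < a → x j = 0 := by
    intro j hj
    simp only [hx_def, Pi.smul_apply, smul_eq_mul]
    rw [show j = ⟨(j : ℕ), j.isLt⟩ from rfl, hmin _ hj, mul_zero]
  have hxne : x ≠ 0 := by
    intro hc
    rw [hc] at hxa
    simp at hxa
  set v : Fin (k - a - 1) → F := fun i => -x ⟨a + 1 + i, by have := i.isLt; omega⟩ with hv_def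
  have hxv : ∀ (j : Fin k) (hj : a < (j : ℕ)),
      x j = -(v ⟨(j : ℕ) - a - 1, by have := j.isLt; omega⟩) := by
    intro j hj
    simp only [hv_def, neg_neg]
    congr 1
    apply Fin.ext
    show (j : ℕ) = a + 1 + ((j : ℕ) - a - 1)
    omega
  -- x is in the kernel of Mrep
  have hMx : (Mrep F k a v).mulVec x = 0 := by
    funext i
    rw [Mrep_mulVec ha]
    by_cases hi : (i : ℕ) ≤ a
    · rw [dif_pos hi]
      by_cases h0 : (i : ℕ) = 0
      · rw [if_pos h0]; rfl
      · rw [if_neg h0]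
        exact hx0 _ (show (i : ℕ) - 1 < a by omega)
    · rw [dif_neg hi]
      push_neg at hi
      rw [hxa, mul_one, hxv i hi]
      show v _ + -v _ = (0 : Fin k → F) i
      rw [add_neg_cancel]
      rfl
  -- kernel of Mrep is contained in span of x
  have hker_le : ker (Mrep F k a v).mulVecLin ≤ Submodule.span F {x} := by
    intro y hy
    rw [LinearMap.mem_ker, Matrix.mulVecLin_apply] at hy
    obtain ⟨hl, hh⟩ := Mrep_rows ha v y hy
    have hy_eq : y = y ⟨a, ha⟩ • x := by
      funext j
      rcases lt_trichotomy ((j : ℕ)) a with hj | hj | hj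
      · rw [Pi.smul_apply, hx0 j hj, smul_zero]
        exact hl (j : ℕ) hj
      · have hjj : j = ⟨a, ha⟩ := Fin.ext hj
        rw [hjj, Pi.smul_apply, hxa, smul_eq_mul, mul_one]
      · have h1 := hh (j : ℕ) hj j.isLt
        rw [Pi.smul_apply, hxv j hj, smul_eq_mul]
        have h2 : y ⟨(j : ℕ), j.isLt⟩ = y j := rfl
        rw [h2] at h1
        linear_combination h1
    rw [hy_eq]
    exact Submodule.smul_mem _ _ (Submodule.mem_span_singleton_self x)
  have hkerM : ker (Mrep F k a v).mulVecLin = Submodule.span F {x} := by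
    apply le_antisymm hker_le
    rw [Submodule.span_le, Set.singleton_subset_iff]
    rw [SetLike.mem_coe, LinearMap.mem_ker, Matrix.mulVecLin_apply]
    exact hMx
  have hkerm : ker m.mulVecLin = Submodule.span F {x} := by
    symm
    apply Submodule.eq_of_le_of_finrank_le
    · rw [Submodule.span_le, Set.singleton_subset_iff]
      exact hxmem
    · rw [hker1, finrank_span_singleton hxne]
  obtain ⟨e, he⟩ := exists_equiv_comp_eq (Mrep F k a v).mulVecLin m.mulVecLin
    (by rw [hkerM, hkerm])
  have hcomp : e.toLinearMap ∘ₗ e.symm.toLinearMap = LinearMap.id := by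
    apply LinearMap.ext
    intro y
    simp
  have hcomp' : e.symm.toLinearMap ∘ₗ e.toLinearMap = LinearMap.id := by
    apply LinearMap.ext
    intro y
    simp
  refine ⟨⟨LinearMap.toMatrix' e.toLinearMap, LinearMap.toMatrix' e.symm.toLinearMap,
    by rw [← LinearMap.toMatrix'_comp, hcomp, LinearMap.toMatrix'_id],
    by rw [← LinearMap.toMatrix'_comp, hcomp', LinearMap.toMatrix'_id]⟩, a, ha, v, ?_, ?_⟩
  · -- h.val * m = Mrep
    apply Matrix.toLin'.injective
    show ((LinearMap.toMatrix' e.toLinearMap : Matrix (Fin k) (Fin k) F) * m).mulVecLin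
      = (Mrep F k a v).mulVecLin
    rw [Matrix.mulVecLin_mul]
    have h1 : (LinearMap.toMatrix' e.toLinearMap : Matrix (Fin k) (Fin k) F).mulVecLin
        = e.toLinearMap := Matrix.toLin'_toMatrix' e.toLinearMap
    rw [h1]
    exact LinearMap.ext fun y => he y
  · -- uniqueness
    intro h' a' ha' v' heq
    have hmx : m.mulVec x = 0 := hxmem
    have hM'x : (Mrep F k a' v').mulVec x = 0 := by
      rw [← heq, ← Matrix.mulVec_mulVec, hmx, Matrix.mulVec_zero]
    obtain ⟨hl', hh'⟩ := Mrep_rows ha' v' x hM'x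
    have haa : a' = a := by
      by_contra hc
      rcases Nat.lt_or_ge a' a with hlt | hge
      · -- a' < a : row a gives x ⟨a⟩ = 0, contradiction
        have h1 := hh' a hlt ha
        rw [hx0 ⟨a', ha'⟩ hlt, mul_zero, zero_add, hxa] at h1
        exact one_ne_zero h1
      · have hlt : a < a' := by omega
        have h1 := hl' a hlt
        rw [hxa] at h1
        exact one_ne_zero h1
    subst haa
    refine ⟨rfl, heq_of_eq ?_⟩
    funext i
    have h1 := hh' (a' + 1 + (i : ℕ)) (by omega) (by have := i.isLt; omega)
    have hieq : (⟨a' + 1 + (i : ℕ) - a' - 1, by have := i.isLt; omega⟩ : Fin (k - a' - 1)) = i :=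
      Fin.ext (show a' + 1 + (i : ℕ) - a' - 1 = (i : ℕ) by omega)
    rw [hieq, hxa, mul_one] at h1
    have h2 : v' i = -x ⟨a' + 1 + (i : ℕ), by have := i.isLt; omega⟩ :=
      eq_neg_of_add_eq_zero_left h1
    rw [h2]
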